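/- Let p ≥ 1 and α_1,…,α_p ∈ [0,1] with α_p > 0, and suppose the greatest common divisor of {i ∈ {1,…,p} : α_i > 0} equals 1. Let r = ρ(A), let u ∈ ℝ^p be given by u_i = r^{−i+1}/Σ_{k=1}^p r^{−k+1} and v ∈ ℝ^p by v_i = (Σ_{k=1}^p r^{−k+1})/(Σ_{k=1}^p k α_k r^{−k}) · Σ_{ℓ=i}^p α_ℓ r^{i−1−ℓ}. Then r^{−n} A^n converges, as n → ∞, to the rank-one matrix Π := u vᵀ. -/

import Mathlib

open Matrix Filter

noncomputable section

/-- The companion matrix with first row `(α_1, …, α_p)` and subdiagonal entries `1`. -/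
def companion (p : ℕ) (α : Fin p → ℝ) : Matrix (Fin p) (Fin p) ℝ :=
  Matrix.of fun i j => if (i : ℕ) = 0 then α j else if (i : ℕ) = (j : ℕ) + 1 then 1 else 0

/-- The spectral radius of a real matrix: the maximum (supremum) of the moduli of its
complex eigenvalues. -/
def specRad {p : ℕ} (A : Matrix (Fin p) (Fin p) ℝ) : ℝ :=
  sSup {r : ℝ | ∃ z ∈ spectrum ℂ (A.map (Complex.ofReal : ℝ → ℂ)), ‖z‖ = r}

/-- The right Perron vector (0-based indices). -/
def perronU (p : ℕ) (r : ℝ) : Fin p → ℝ :=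
  fun i => r ^ (-(i : ℤ)) / ∑ k : Fin p, r ^ (-(k : ℤ))

/-- The left Perron vector (0-based indices). -/
def perronV (p : ℕ) (α : Fin p → ℝ) (r : ℝ) : Fin p → ℝ :=
  fun i => (∑ k : Fin p, r ^ (-(k : ℤ))) /
      (∑ k : Fin p, ((k : ℕ) + 1 : ℝ) * α k * r ^ (-((k : ℕ) + 1 : ℤ))) *
      ∑ ℓ ∈ Finset.univ.filter (fun ℓ : Fin p => i ≤ ℓ),
        α ℓ * r ^ ((i : ℤ) - (ℓ : ℤ) - 1)


lemma stoch_conv {p : ℕ} (hp : 0 < p) (K : ℕ → Fin p → Fin p → ℝ)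
    (hmul : ∀ a b i j, K (a + b) i j = ∑ k, K a i k * K b k j)
    (hpos : ∀ n i j, 0 ≤ K n i j)
    (hrow : ∀ n i, ∑ j, K n i j = 1)
    (N : ℕ) (hN : 1 ≤ N) (δ : ℝ) (hδ : 0 < δ) (hKN : ∀ i j, δ ≤ K N i j) :
    ∃ L : Fin p → ℝ, ∀ i j, Tendsto (fun n => K n i j) atTop (nhds (L j)) := by
  have hne : Nonempty (Fin p) := ⟨⟨0, hp⟩⟩
  have huniv : (Finset.univ : Finset (Fin p)).Nonempty := Finset.univ_nonempty
  suffices h : ∀ j : Fin p, ∃ Lj : ℝ, ∀ i, Tendsto (fun n => K n i j) atTop (nhds Lj) by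
    choose L hL using h
    exact ⟨L, fun i j => hL j i⟩
  intro j
  set M : ℕ → ℝ := fun n => Finset.univ.sup' huniv (fun i => K n i j) with hM
  set m : ℕ → ℝ := fun n => Finset.univ.inf' huniv (fun i => K n i j) with hm
  have hmM : ∀ n, m n ≤ M n := by
    intro n
    exact le_trans (Finset.inf'_le (fun i => K n i j) (Finset.mem_univ (⟨0, hp⟩ : Fin p)))
      (Finset.le_sup' (fun i => K n i j) (Finset.mem_univ (⟨0, hp⟩ : Fin p)))
  -- one-step bounds
  have step_ub : ∀ a n i, K (a + n) i j ≤ M n := by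
    intro a n i
    rw [hmul]
    calc ∑ k, K a i k * K n k j ≤ ∑ k, K a i k * M n := by
          apply Finset.sum_le_sum
          intro k _
          exact mul_le_mul_of_nonneg_left
            (Finset.le_sup' (fun i => K n i j) (Finset.mem_univ k)) (hpos a i k)
      _ = M n := by rw [← Finset.sum_mul, hrow, one_mul]
  have step_lb : ∀ a n i, m n ≤ K (a + n) i j := by
    intro a n i
    rw [hmul]
    calc (m n : ℝ) = ∑ k, K a i k * m n := by rw [← Finset.sum_mul, hrow, one_mul]
      _ ≤ ∑ k, K a i k * K n k j := by
          apply Finset.sum_le_sum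
          intro k _
          exact mul_le_mul_of_nonneg_left
            (Finset.inf'_le (fun i => K n i j) (Finset.mem_univ k)) (hpos a i k)
  have hManti : Antitone M := by
    apply antitone_nat_of_succ_le
    intro n
    apply Finset.sup'_le
    intro i _
    have := step_ub 1 n i
    simpa [Nat.add_comm] using this
  have hmmono : Monotone m := by
    apply monotone_nat_of_le_succ
    intro n
    apply Finset.le_inf'
    intro i _
    have := step_lb 1 n i
    simpa [Nat.add_comm] using this
  -- Doeblin contraction
  have doeblin : ∀ n, M (N + n) - m (N + n) ≤ (1 - 2 * δ) * (M n - m n) := by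
    intro n
    obtain ⟨k0, -, hk0⟩ := Finset.exists_mem_eq_inf' huniv (fun i => K n i j)
    obtain ⟨k1, -, hk1⟩ := Finset.exists_mem_eq_sup' huniv (fun i => K n i j)
    have hub : ∀ i, K (N + n) i j ≤ M n - δ * (M n - m n) := by
      intro i
      rw [hmul]
      have expand : ∑ k, K N i k * K n k j
          = K N i k0 * K n k0 j + ∑ k ∈ Finset.univ.erase k0, K N i k * K n k j :=
        (Finset.add_sum_erase _ _ (Finset.mem_univ k0)).symm
      rw [expand]
      have h2 : ∑ k ∈ Finset.univ.erase k0, K N i k * K n k j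
          ≤ ∑ k ∈ Finset.univ.erase k0, K N i k * M n := by
        apply Finset.sum_le_sum
        intro k _
        exact mul_le_mul_of_nonneg_left
          (Finset.le_sup' (fun i => K n i j) (Finset.mem_univ k)) (hpos N i k)
      have h3 : ∑ k ∈ Finset.univ.erase k0, K N i k * M n = (1 - K N i k0) * M n := by
        rw [← Finset.sum_mul]
        have := hrow N i
        rw [← Finset.add_sum_erase _ _ (Finset.mem_univ k0)] at this
        have h6 : ∑ k ∈ Finset.univ.erase k0, K N i k = 1 - K N i k0 := by linarith
        rw [h6]
      have h4 : K N i k0 * K n k0 j = K N i k0 * m n := by rw [← hk0]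
      have h5 : K N i k0 * m n + (1 - K N i k0) * M n ≤ M n - δ * (M n - m n) := by
        have hd : δ ≤ K N i k0 := hKN i k0
        have hmn : m n ≤ M n := hmM n
        nlinarith
      linarith
    have hlb : ∀ i, m n + δ * (M n - m n) ≤ K (N + n) i j := by
      intro i
      rw [hmul]
      have expand : ∑ k, K N i k * K n k j
          = K N i k1 * K n k1 j + ∑ k ∈ Finset.univ.erase k1, K N i k * K n k j :=
        (Finset.add_sum_erase _ _ (Finset.mem_univ k1)).symm
      rw [expand]
      have h2 : ∑ k ∈ Finset.univ.erase k1, K N i k * m n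
          ≤ ∑ k ∈ Finset.univ.erase k1, K N i k * K n k j := by
        apply Finset.sum_le_sum
        intro k _
        exact mul_le_mul_of_nonneg_left
          (Finset.inf'_le (fun i => K n i j) (Finset.mem_univ k)) (hpos N i k)
      have h3 : ∑ k ∈ Finset.univ.erase k1, K N i k * m n = (1 - K N i k1) * m n := by
        rw [← Finset.sum_mul]
        have := hrow N i
        rw [← Finset.add_sum_erase _ _ (Finset.mem_univ k1)] at this
        have h6 : ∑ k ∈ Finset.univ.erase k1, K N i k = 1 - K N i k1 := by linarith
        rw [h6]
      have h4 : K N i k1 * K n k1 j = K N i k1 * M n := by rw [← hk1]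
      have h5 : m n + δ * (M n - m n) ≤ K N i k1 * M n + (1 - K N i k1) * m n := by
        have hd : δ ≤ K N i k1 := hKN i k1
        have hmn : m n ≤ M n := hmM n
        nlinarith
      linarith
    have hMb : M (N + n) ≤ M n - δ * (M n - m n) := Finset.sup'_le _ _ fun i _ => hub i
    have hmb : m n + δ * (M n - m n) ≤ m (N + n) := Finset.le_inf' _ _ fun i _ => hlb i
    nlinarith [hmM n]
  -- limits of M and m
  have hMbdd : BddBelow (Set.range M) := ⟨m 0, by
    rintro x ⟨n, rfl⟩; exact le_trans (hmmono (Nat.zero_le n)) (hmM n)⟩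
  have hmbdd : BddAbove (Set.range m) := ⟨M 0, by
    rintro x ⟨n, rfl⟩; exact le_trans (hmM n) (hManti (Nat.zero_le n))⟩
  have hMt : Tendsto M atTop (nhds (⨅ n, M n)) := tendsto_atTop_ciInf hManti hMbdd
  have hmt : Tendsto m atTop (nhds (⨆ n, m n)) := tendsto_atTop_ciSup hmmono hmbdd
  set LM := ⨅ n, M n
  set Lm := ⨆ n, m n
  -- geometric decay along multiples of N
  set c : ℝ := max (1 - 2 * δ) 0 with hc
  have hc0 : 0 ≤ c := le_max_right _ _
  have hc1 : c < 1 := by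
    apply max_lt
    · linarith
    · norm_num
  have geom : ∀ k : ℕ, M (k * N) - m (k * N) ≤ c ^ k * (M 0 - m 0) := by
    intro k
    induction k with
    | zero => simp
    | succ k ih =>
      have h1 : M ((k + 1) * N) - m ((k + 1) * N) ≤ (1 - 2 * δ) * (M (k * N) - m (k * N)) := by
        have : (k + 1) * N = N + k * N := by ring
        rw [this]
        exact doeblin (k * N)
      have h2 : (1 - 2 * δ) * (M (k * N) - m (k * N)) ≤ c * (M (k * N) - m (k * N)) := by
        apply mul_le_mul_of_nonneg_right (le_max_left _ _)
        linarith [hmM (k * N)]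
      have h3 : c * (M (k * N) - m (k * N)) ≤ c * (c ^ k * (M 0 - m 0)) :=
        mul_le_mul_of_nonneg_left ih hc0
      calc M ((k + 1) * N) - m ((k + 1) * N) ≤ c * (c ^ k * (M 0 - m 0)) := by linarith
        _ = c ^ (k + 1) * (M 0 - m 0) := by ring
  -- LM = Lm
  have hLML : LM = Lm := by
    have hsub : Tendsto (fun k : ℕ => k * N) atTop atTop :=
      tendsto_atTop_mono (fun k => Nat.le_mul_of_pos_right k hN) tendsto_id
    have hdk : Tendsto (fun k : ℕ => M (k * N) - m (k * N)) atTop (nhds (LM - Lm)) :=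
      ((hMt.sub hmt).comp hsub)
    have hge : LM - Lm ≤ 0 := by
      have hlim : Tendsto (fun k : ℕ => c ^ k * (M 0 - m 0)) atTop (nhds 0) := by
        have := (tendsto_pow_atTop_nhds_zero_of_lt_one hc0 hc1).mul_const (M 0 - m 0)
        simpa using this
      exact le_of_tendsto_of_tendsto hdk hlim (Eventually.of_forall geom)
    have hle : 0 ≤ LM - Lm := by
      have : Tendsto (fun k : ℕ => M (k * N) - m (k * N)) atTop (nhds (LM - Lm)) := hdk
      apply ge_of_tendsto this
      exact Eventually.of_forall fun k => by linarith [hmM (k * N)]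
    linarith
  refine ⟨LM, fun i => ?_⟩
  have hup : ∀ n, K n i j ≤ M n := fun n => Finset.le_sup' (fun i => K n i j) (Finset.mem_univ i)
  have hlo : ∀ n, m n ≤ K n i j := fun n => Finset.inf'_le (fun i => K n i j) (Finset.mem_univ i)
  have hmt' : Tendsto m atTop (nhds LM) := hLML ▸ hmt
  exact tendsto_of_tendsto_of_tendsto_of_le_of_le hmt' hMt hlo hup

lemma nat_mul_mem (M : AddSubmonoid ℕ) {x : ℕ} (hx : x ∈ M) (n : ℕ) : n * x ∈ M := by
  simpa [nsmul_eq_mul] using M.nsmul_mem hx n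

lemma gcd_bezout {ι : Type*} [DecidableEq ι] (F : Finset ι) (f : ι → ℕ) (M : AddSubmonoid ℕ)
    (hF : ∀ i ∈ F, f i ∈ M) : ∃ X ∈ M, ∃ Y ∈ M, X = Y + F.gcd f := by
  classical
  induction F using Finset.induction_on with
  | empty => exact ⟨0, M.zero_mem, 0, M.zero_mem, by simp⟩
  | @insert a F ha ih =>
    obtain ⟨X, hX, Y, hY, hXY⟩ := ih (fun i hi => hF i (Finset.mem_insert_of_mem hi))
    have hfa : f a ∈ M := hF a (Finset.mem_insert_self a F)
    set g : ℕ := F.gcd f with hg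
    set s : ℤ := Nat.gcdA (f a) g
    set t : ℤ := Nat.gcdB (f a) g
    have hbez : ((Nat.gcd (f a) g : ℕ) : ℤ) = (f a : ℤ) * s + (g : ℤ) * t := Nat.gcd_eq_gcd_ab (f a) g
    refine ⟨s.toNat * f a + t.toNat * X + (-t).toNat * Y, ?_,
      (-s).toNat * f a + (-t).toNat * X + t.toNat * Y, ?_, ?_⟩
    · exact M.add_mem (M.add_mem (nat_mul_mem M hfa _) (nat_mul_mem M hX _)) (nat_mul_mem M hY _)
    · exact M.add_mem (M.add_mem (nat_mul_mem M hfa _) (nat_mul_mem M hX _)) (nat_mul_mem M hY _)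
    · have hgcd' : (insert a F).gcd f = Nat.gcd (f a) g := Finset.gcd_insert
      have hXY' : (X : ℤ) = (Y : ℤ) + (g : ℤ) := by exact_mod_cast congrArg (Nat.cast : ℕ → ℤ) hXY
      have hs : ((s.toNat : ℤ) - ((-s).toNat : ℤ)) = s := Int.toNat_sub_toNat_neg s
      have ht : ((t.toNat : ℤ) - ((-t).toNat : ℤ)) = t := Int.toNat_sub_toNat_neg t
      have : ((s.toNat * f a + t.toNat * X + (-t).toNat * Y : ℕ) : ℤ)
          = (((-s).toNat * f a + (-t).toNat * X + t.toNat * Y + (insert a F).gcd f : ℕ) : ℤ) := by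
        push_cast
        rw [hgcd']
        push_cast
        nlinarith [hbez, hXY', hs, ht]
      exact_mod_cast this

lemma semigroup_cofinite (M : AddSubmonoid ℕ) (X Y : ℕ) (hX : X ∈ M) (hY : Y ∈ M)
    (hXY : X = Y + 1) : ∀ n, Y * Y ≤ n → n ∈ M := by
  intro n hn
  rcases Nat.eq_zero_or_pos Y with hY0 | hY0
  · subst hY0
    simp at hXY
    subst hXY
    simpa using nat_mul_mem M hX n
  · set q := n / Y
    set t := n % Y
    have ht : t < Y := Nat.mod_lt _ hY0
    have hq : Y ≤ q := by
      have h := Nat.div_le_div_right (c := Y) hn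
      rwa [Nat.mul_div_cancel _ hY0] at h
    have hrep : n = t * X + (q - t) * Y := by
      subst hXY
      have h1 : t ≤ q := le_trans ht.le hq
      have h2 : Y * q + t = n := Nat.div_add_mod n Y
      have h3 : (q - t) * Y = q * Y - t * Y := Nat.sub_mul q t Y
      have h4 : t * Y ≤ q * Y := Nat.mul_le_mul_right Y h1
      calc n = Y * q + t := h2.symm
        _ = t * (Y + 1) + (q - t) * Y := by
            have h5 : t * (Y + 1) = t * Y + t := by ring
            have h6 : Y * q = q * Y := Nat.mul_comm Y q
            rw [h3]; omega
    rw [hrep]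
    exact M.add_mem (nat_mul_mem M hX t) (nat_mul_mem M hY (q - t))
section comb
variable {p : ℕ} {α : Fin p → ℝ} (hα : ∀ i, α i ∈ Set.Icc (0 : ℝ) 1)

lemma companion_nonneg (hα : ∀ i, 0 ≤ α i) : ∀ i j, 0 ≤ companion p α i j := by
  intro i j
  unfold companion
  simp only [Matrix.of_apply]
  split_ifs with h1 h2
  · exact hα j
  · norm_num
  · exact le_refl 0

lemma companion_pow_nonneg (hα : ∀ i, 0 ≤ α i) : ∀ n i j, 0 ≤ (companion p α ^ n) i j := by
  intro n
  induction n with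
  | zero => intro i j; simp [Matrix.one_apply]; split_ifs <;> norm_num
  | succ n ih =>
    intro i j
    rw [pow_succ]
    rw [Matrix.mul_apply]
    apply Finset.sum_nonneg
    intro k _
    exact mul_nonneg (ih i k) (companion_nonneg hα k j)

lemma pow_entry_mul_le (hα : ∀ i, 0 ≤ α i) (a b : ℕ) (i j k : Fin p) :
    (companion p α ^ a) i k * (companion p α ^ b) k j ≤ (companion p α ^ (a + b)) i j := by
  rw [pow_add, Matrix.mul_apply]
  apply Finset.single_le_sum (f := fun k => (companion p α ^ a) i k * (companion p α ^ b) k j)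
    (fun k _ => mul_nonneg (companion_pow_nonneg hα a i k) (companion_pow_nonneg hα b k j))
    (Finset.mem_univ k)

-- slide: (A^k) i j ≥ 1 when i = j + k
lemma slide_ge_one (hα : ∀ i, 0 ≤ α i) : ∀ (k : ℕ) (i j : Fin p), (i : ℕ) = (j : ℕ) + k →
    1 ≤ (companion p α ^ k) i j := by
  intro k
  induction k with
  | zero =>
    intro i j hij
    have : i = j := Fin.ext (by omega)
    subst this
    simp [Matrix.one_apply]
  | succ k ih =>
    intro i j hij
    have hi : (i : ℕ) = (j : ℕ) + k + 1 := by omega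
    have hik : (j : ℕ) + k < p := by omega
    set i' : Fin p := ⟨(j : ℕ) + k, hik⟩
    have h1 : companion p α i i' = 1 := by
      unfold companion
      simp only [Matrix.of_apply]
      have hi' : (i' : ℕ) = (j : ℕ) + k := rfl
      rw [if_neg (by omega), if_pos (by omega)]
    have h2 : 1 ≤ (companion p α ^ k) i' j := ih i' j rfl
    calc (1 : ℝ) = companion p α i i' * 1 := by rw [h1, mul_one]
      _ ≤ companion p α i i' * (companion p α ^ k) i' j := by
          apply mul_le_mul_of_nonneg_left h2 (companion_nonneg hα i i')
      _ ≤ (companion p α ^ (1 + k)) i j := by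
          have := pow_entry_mul_le hα 1 k i j i'
          rw [pow_one] at this
          exact this
      _ = (companion p α ^ (k + 1)) i j := by rw [Nat.add_comm]

end comb
section prim
variable {p : ℕ} {α : Fin p → ℝ}

lemma jump_entry (hp : 0 < p) (ℓ : Fin p) : companion p α ⟨0, hp⟩ ℓ = α ℓ := by
  unfold companion
  simp

lemma jump_pos (hp : 0 < p) (hα : ∀ i, 0 ≤ α i) (hαp : 0 < α ⟨p - 1, Nat.sub_lt hp one_pos⟩) (j : Fin p) : 0 < (companion p α ^ (p - (j:ℕ))) ⟨0, hp⟩ j := by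
  have hL : (p : ℕ) - 1 < p := by omega
  set L : Fin p := ⟨p - 1, hL⟩
  have h1 : companion p α ⟨0, hp⟩ L = α L := jump_entry hp L
  have h2 : 1 ≤ (companion p α ^ ((p - 1) - (j:ℕ))) L j :=
    slide_ge_one hα _ L j (by have := j.isLt; simp only [L]; omega)
  have h3 : (companion p α ^ 1) ⟨0, hp⟩ L * (companion p α ^ ((p-1) - (j:ℕ))) L j
      ≤ (companion p α ^ (1 + ((p-1) - (j:ℕ)))) ⟨0, hp⟩ j := pow_entry_mul_le hα _ _ _ _ _
  have h4 : (1 : ℕ) + ((p-1) - (j:ℕ)) = p - (j:ℕ) := by have := j.isLt; omega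
  rw [h4] at h3
  have h5 : (0:ℝ) < (companion p α ^ 1) ⟨0, hp⟩ L * (companion p α ^ ((p-1) - (j:ℕ))) L j := by
    rw [pow_one, h1]
    exact mul_pos hαp (lt_of_lt_of_le one_pos h2)
  exact lt_of_lt_of_le h5 h3

/-- The return-time submonoid. -/
def retM (hp : 0 < p) (hα : ∀ i, 0 ≤ α i) : AddSubmonoid ℕ where
  carrier := {m | 0 < (companion p α ^ m) ⟨0, hp⟩ ⟨0, hp⟩}
  zero_mem' := by simp [Matrix.one_apply]
  add_mem' := by
    intro a b ha hb
    simp only [Set.mem_setOf_eq] at *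
    exact lt_of_lt_of_le (mul_pos ha hb) (pow_entry_mul_le hα a b _ _ _)

lemma cycle_mem (hp : 0 < p) (hα : ∀ i, 0 ≤ α i) (i : Fin p) (hi : 0 < α i) : ((i : ℕ) + 1) ∈ retM hp hα := by
  show 0 < (companion p α ^ ((i:ℕ) + 1)) ⟨0, hp⟩ ⟨0, hp⟩
  have h1 : companion p α ⟨0, hp⟩ i = α i := jump_entry hp i
  have h2 : 1 ≤ (companion p α ^ (i : ℕ)) i ⟨0, hp⟩ := slide_ge_one hα _ i _ (by simp)
  have h3 := pow_entry_mul_le hα 1 (i : ℕ) ⟨0, hp⟩ ⟨0, hp⟩ i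
  rw [pow_one, h1] at h3
  have h4 : (1:ℕ) + (i:ℕ) = (i:ℕ) + 1 := Nat.add_comm _ _
  rw [h4] at h3
  exact lt_of_lt_of_le (mul_pos hi (lt_of_lt_of_le one_pos h2)) h3

lemma primitivity (hp : 0 < p) (hα : ∀ i, 0 ≤ α i) (hαp : 0 < α ⟨p - 1, Nat.sub_lt hp one_pos⟩)
    (hgcd : (Finset.univ.filter fun i : Fin p => 0 < α i).gcd (fun i => (i : ℕ) + 1) = 1) :
    ∃ N, 1 ≤ N ∧ ∀ i j, 0 < (companion p α ^ N) i j := by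
  obtain ⟨X, hX, Y, hY, hXY⟩ := gcd_bezout (Finset.univ.filter fun i : Fin p => 0 < α i)
    (fun i => (i : ℕ) + 1) (retM hp hα)
    (fun i hi => cycle_mem hp hα i (by simpa using (Finset.mem_filter.mp hi).2))
  rw [hgcd] at hXY
  have hcof := semigroup_cofinite (retM hp hα) X Y hX hY hXY
  refine ⟨Y * Y + 2 * p, by omega, ?_⟩
  intro i j
  set N := Y * Y + 2 * p
  set m := N - (i : ℕ) - (p - (j : ℕ)) with hm
  have hiN : (i : ℕ) + (p - (j:ℕ)) ≤ N := by have := i.isLt; have := j.isLt; omega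
  have hmY : Y * Y ≤ m := by have := i.isLt; have := j.isLt; omega
  have hmem : 0 < (companion p α ^ m) ⟨0, hp⟩ ⟨0, hp⟩ := hcof m hmY
  have hslide : 1 ≤ (companion p α ^ (i : ℕ)) i ⟨0, hp⟩ := slide_ge_one hα _ i _ (by simp)
  have hjump : 0 < (companion p α ^ (p - (j:ℕ))) ⟨0, hp⟩ j := jump_pos hp hα hαp j
  have c1 : (companion p α ^ m) ⟨0, hp⟩ ⟨0, hp⟩ * (companion p α ^ (p - (j:ℕ))) ⟨0, hp⟩ j
      ≤ (companion p α ^ (m + (p - (j:ℕ)))) ⟨0, hp⟩ j := pow_entry_mul_le hα _ _ _ _ _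
  have c2 : (companion p α ^ (i:ℕ)) i ⟨0, hp⟩ * (companion p α ^ (m + (p - (j:ℕ)))) ⟨0, hp⟩ j
      ≤ (companion p α ^ ((i:ℕ) + (m + (p - (j:ℕ))))) i j := pow_entry_mul_le hα _ _ _ _ _
  have hNeq : (i:ℕ) + (m + (p - (j:ℕ))) = N := by omega
  rw [hNeq] at c2
  have pos1 : 0 < (companion p α ^ (m + (p - (j:ℕ)))) ⟨0, hp⟩ j :=
    lt_of_lt_of_le (mul_pos hmem hjump) c1
  exact lt_of_lt_of_le (by nlinarith) c2

end prim
section phi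
variable {p : ℕ} {α : Fin p → ℝ}

/-- `φ x = ∑ α_k x^{-(k+1)}`. -/
def phi (p : ℕ) (α : Fin p → ℝ) (x : ℝ) : ℝ := ∑ k : Fin p, α k * x ^ (-((k : ℕ) + 1) : ℤ)

lemma zpow_neg_eq (x : ℝ) (k : ℕ) : x ^ (-((k : ℕ) + 1) : ℤ) = (x ^ (k + 1))⁻¹ := by
  rw [_root_.zpow_neg, ← zpow_natCast x (k+1)]
  norm_num

lemma phi_strictAnti (hp : 0 < p) (hα : ∀ i, 0 ≤ α i) (hαp : 0 < α ⟨p - 1, Nat.sub_lt hp one_pos⟩)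
    {x y : ℝ} (hx : 0 < x) (hxy : x < y) : phi p α y < phi p α x := by
  unfold phi
  apply Finset.sum_lt_sum
  · intro k _
    apply mul_le_mul_of_nonneg_left _ (hα k)
    rw [zpow_neg_eq, zpow_neg_eq]
    apply inv_anti₀ (pow_pos hx _)
    exact pow_le_pow_left₀ hx.le hxy.le _
  · refine ⟨⟨p - 1, by omega⟩, Finset.mem_univ _, ?_⟩
    apply mul_lt_mul_of_pos_left _ hαp
    rw [zpow_neg_eq, zpow_neg_eq]
    apply inv_strictAnti₀ (pow_pos hx _)
    exact pow_lt_pow_left₀ hxy hx.le (by omega)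

lemma phi_root_exists (hp : 0 < p) (hα : ∀ i, α i ∈ Set.Icc (0:ℝ) 1)
    (hαp : 0 < α ⟨p - 1, Nat.sub_lt hp one_pos⟩) : ∃ r : ℝ, 0 < r ∧ phi p α r = 1 := by
  set L : Fin p := ⟨p - 1, by omega⟩
  set a : ℝ := min 1 (α L) with ha
  have ha0 : 0 < a := lt_min one_pos hαp
  have ha1 : a ≤ 1 := min_le_left _ _
  set b : ℝ := (p : ℝ) + 1 with hb
  have hab : a ≤ b := by
    have hpn : (0:ℝ) ≤ (p:ℝ) := Nat.cast_nonneg p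
    simp only [hb]
    linarith
  have hcont : ContinuousOn (phi p α) (Set.Icc a b) := by
    apply continuousOn_finset_sum
    intro k _
    apply ContinuousOn.mul continuousOn_const
    intro x hx
    have hx0 : x ≠ 0 := by
      have := hx.1
      intro h; rw [h] at this; linarith
    exact (continuousAt_zpow₀ x _ (Or.inl hx0)).continuousWithinAt
  have hfa : 1 ≤ phi p α a := by
    have h1 : α L * a ^ (-((L:ℕ) + 1) : ℤ) ≤ phi p α a := by
      unfold phi
      apply Finset.single_le_sum (f := fun k => α k * a ^ (-((k:ℕ) + 1) : ℤ))
        (fun k _ => mul_nonneg (hα k).1 (by positivity)) (Finset.mem_univ L)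
    have h2 : 1 ≤ α L * a ^ (-((L:ℕ) + 1) : ℤ) := by
      rw [zpow_neg_eq, ← div_eq_mul_inv, le_div_iff₀ (pow_pos ha0 _), one_mul]
      have hstep : a ^ ((L:ℕ) + 1) ≤ a := by
        calc a ^ ((L:ℕ) + 1) ≤ a ^ 1 := pow_le_pow_of_le_one ha0.le ha1 (by omega)
          _ = a := pow_one a
      exact hstep.trans (min_le_right _ _)
    linarith
  have hfb : phi p α b ≤ (p : ℝ) / ((p:ℝ) + 1) := by
    unfold phi
    calc ∑ k : Fin p, α k * b ^ (-((k:ℕ)+1) : ℤ) ≤ ∑ k : Fin p, 1 * b⁻¹ := by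
          apply Finset.sum_le_sum
          intro k _
          apply mul_le_mul (hα k).2 _ (by positivity) one_pos.le
          rw [zpow_neg_eq]
          apply inv_anti₀ (by positivity)
          calc b = b ^ 1 := (pow_one b).symm
            _ ≤ b ^ ((k:ℕ) + 1) := by
                apply pow_le_pow_right₀ _ (by omega)
                have hpn : (0:ℝ) ≤ (p:ℝ) := Nat.cast_nonneg p
                simp only [hb]; linarith
      _ = (p : ℝ) * b⁻¹ := by simp [Finset.sum_const, Finset.card_univ]
      _ = (p : ℝ) / ((p:ℝ)+1) := by rw [hb, mul_comm]; field_simp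
  have hfb1 : phi p α b ≤ 1 := by
    have hp1 : (0:ℝ) < (p:ℝ) + 1 := by positivity
    have : (p:ℝ) / ((p:ℝ)+1) ≤ 1 := by
      rw [div_le_one hp1]; linarith
    linarith
  have := intermediate_value_Icc' hab hcont
  have h1 : (1:ℝ) ∈ Set.Icc (phi p α b) (phi p α a) := ⟨hfb1, hfa⟩
  obtain ⟨r, hr, hfr⟩ := this h1
  exact ⟨r, lt_of_lt_of_le ha0 hr.1, hfr⟩

end phi
def wv (p : ℕ) (r : ℝ) : Fin p → ℝ := fun i => r ^ (-(i : ℤ))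

def vt (p : ℕ) (α : Fin p → ℝ) (r : ℝ) : Fin p → ℝ :=
  fun i => ∑ ℓ ∈ Finset.univ.filter (fun ℓ : Fin p => i ≤ ℓ), α ℓ * r ^ ((i : ℤ) - (ℓ : ℤ) - 1)

def Dd (p : ℕ) (α : Fin p → ℝ) (r : ℝ) : ℝ :=
  ∑ k : Fin p, ((k : ℕ) + 1 : ℝ) * α k * r ^ (-((k : ℕ) + 1 : ℤ))

section eig
variable {p : ℕ} {α : Fin p → ℝ} {r : ℝ}

lemma wv_pos (hr : 0 < r) (i : Fin p) : 0 < wv p r i := zpow_pos hr _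

lemma right_eigen (hp : 0 < p) (hr : 0 < r) (hroot : phi p α r = 1) (i : Fin p) :
    ∑ j, companion p α i j * wv p r j = r * wv p r i := by
  rcases Nat.eq_zero_or_pos (i : ℕ) with h0 | h0
  · -- first row
    have hi : i = ⟨0, hp⟩ := Fin.ext h0
    subst hi
    have : ∀ j : Fin p, companion p α ⟨0, hp⟩ j = α j := by
      intro j; unfold companion; simp
    simp only [this]
    have hterm : ∀ j : Fin p, α j * wv p r j = r * (α j * r ^ (-((j:ℕ) + 1) : ℤ)) := by
      intro j
      unfold wv
      rw [show (-((j:ℕ) + 1) : ℤ) = (-1) + (-(j:ℤ)) by ring, zpow_add₀ hr.ne']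
      rw [_root_.zpow_neg_one]
      field_simp
    rw [Finset.sum_congr rfl (fun j _ => hterm j), ← Finset.mul_sum]
    have : ∑ j : Fin p, α j * r ^ (-((j:ℕ) + 1) : ℤ) = 1 := hroot
    rw [this]
    unfold wv
    simp [h0]
  · -- other rows
    have hi1 : (i : ℕ) - 1 < p := by omega
    set j0 : Fin p := ⟨(i : ℕ) - 1, hi1⟩ with hj0
    have hj0v : (j0 : ℕ) = (i : ℕ) - 1 := rfl
    have hsum : ∑ j, companion p α i j * wv p r j = wv p r j0 := by
      rw [Finset.sum_eq_single j0]
      · have : companion p α i j0 = 1 := by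
          unfold companion
          simp only [Matrix.of_apply]
          rw [if_neg (by omega), if_pos (by omega)]
        rw [this, one_mul]
      · intro b _ hb
        have : companion p α i b = 0 := by
          unfold companion
          simp only [Matrix.of_apply]
          rw [if_neg (by omega), if_neg ?_]
          intro h
          apply hb
          apply Fin.ext
          omega
        rw [this, zero_mul]
      · intro h; exact absurd (Finset.mem_univ j0) h
    rw [hsum]
    unfold wv
    rw [show (-((j0:ℕ) : ℤ)) = 1 + (-(i:ℤ)) by omega, zpow_add₀ hr.ne', zpow_one]

lemma right_eigen_pow (hp : 0 < p) (hr : 0 < r) (hroot : phi p α r = 1) (n : ℕ) (i : Fin p) :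
    ∑ j, (companion p α ^ n) i j * wv p r j = r ^ n * wv p r i := by
  induction n generalizing i with
  | zero => simp [Matrix.one_apply, Finset.sum_ite_eq' Finset.univ i (wv p r)]
  | succ n ih =>
    have : ∀ j, (companion p α ^ (n + 1)) i j = ∑ k, companion p α i k * (companion p α ^ n) k j := by
      intro j
      rw [pow_succ']
      rw [Matrix.mul_apply]
    simp only [this]
    calc ∑ x : Fin p, (∑ k : Fin p, companion p α i k * (companion p α ^ n) k x) * wv p r x
        = ∑ x : Fin p, ∑ k : Fin p, companion p α i k * (companion p α ^ n) k x * wv p r x := by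
          simp [Finset.sum_mul]
      _ = ∑ k : Fin p, ∑ x : Fin p, companion p α i k * (companion p α ^ n) k x * wv p r x :=
          Finset.sum_comm
      _ = ∑ k : Fin p, companion p α i k * (r ^ n * wv p r k) := by
          apply Finset.sum_congr rfl
          intro k _
          simp only [mul_assoc]
          rw [← Finset.mul_sum, ih k]
      _ = r ^ n * ∑ k : Fin p, companion p α i k * wv p r k := by
          rw [Finset.mul_sum]
          apply Finset.sum_congr rfl
          intro k _
          ring
      _ = r ^ (n + 1) * wv p r i := by
          rw [right_eigen hp hr hroot i, pow_succ]
          ring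


def Sv (p : ℕ) (α : Fin p → ℝ) (r : ℝ) (j : Fin p) : ℝ :=
  ∑ ℓ ∈ Finset.univ.filter (fun ℓ : Fin p => j < ℓ), α ℓ * r ^ ((j : ℤ) - (ℓ : ℤ))

lemma vt_zero (hp : 0 < p) (hroot : phi p α r = 1) : vt p α r ⟨0, hp⟩ = 1 := by
  unfold vt
  have hf : Finset.univ.filter (fun ℓ : Fin p => (⟨0, hp⟩ : Fin p) ≤ ℓ) = Finset.univ := by
    ext ℓ
    simp [Fin.le_def]
  rw [hf]
  rw [← hroot]
  unfold phi
  apply Finset.sum_congr rfl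
  intro ℓ _
  congr 1
  congr 1
  push_cast
  omega

lemma r_mul_vt (hr : 0 < r) (j : Fin p) : r * vt p α r j = α j + Sv p α r j := by
  unfold vt Sv
  have hsplit : Finset.univ.filter (fun ℓ : Fin p => j ≤ ℓ)
      = insert j (Finset.univ.filter (fun ℓ : Fin p => j < ℓ)) := by
    ext ℓ
    simp only [Finset.mem_filter, Finset.mem_univ, true_and, Finset.mem_insert]
    constructor
    · intro h
      rcases eq_or_lt_of_le h with h1 | h1
      · exact Or.inl h1.symm
      · exact Or.inr h1
    · rintro (rfl | h)
      · exact le_refl _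
      · exact h.le
  rw [hsplit, Finset.sum_insert (by simp)]
  rw [mul_add]
  congr 1
  · rw [show ((j:ℤ) - (j:ℤ) - 1) = -1 by ring, _root_.zpow_neg_one]
    field_simp
  · rw [Finset.mul_sum]
    apply Finset.sum_congr rfl
    intro ℓ _
    rw [show ((j:ℤ) - (ℓ:ℤ)) = 1 + ((j:ℤ) - (ℓ:ℤ) - 1) by ring, zpow_add₀ hr.ne', zpow_one]
    ring

lemma col_sum (hp : 0 < p) (hroot : phi p α r = 1) (j : Fin p) :
    ∑ i, vt p α r i * companion p α i j = α j + Sv p α r j := by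
  have h00 : ((⟨0, hp⟩ : Fin p) : ℕ) = 0 := rfl
  by_cases hj : (j : ℕ) + 1 < p
  · obtain ⟨j', hj'v⟩ : ∃ j' : Fin p, (j' : ℕ) = (j : ℕ) + 1 := ⟨⟨(j:ℕ)+1, hj⟩, rfl⟩
    have hne : (⟨0, hp⟩ : Fin p) ≠ j' := by
      intro h
      have := congrArg Fin.val h
      omega
    rw [Finset.sum_eq_add (⟨0, hp⟩ : Fin p) j' hne]
    · have h1 : companion p α ⟨0, hp⟩ j = α j := by unfold companion; simp
      have h2 : companion p α j' j = 1 := by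
        unfold companion
        simp only [Matrix.of_apply]
        rw [if_neg (by omega), if_pos (by omega)]
      rw [h1, h2, vt_zero hp hroot, one_mul, mul_one]
      congr 1
      unfold vt Sv
      have hfilt : Finset.univ.filter (fun ℓ : Fin p => j' ≤ ℓ)
          = Finset.univ.filter (fun ℓ : Fin p => j < ℓ) := by
        ext ℓ
        simp only [Finset.mem_filter, Finset.mem_univ, true_and, Fin.le_def, Fin.lt_def]
        omega
      rw [hfilt]
      apply Finset.sum_congr rfl
      intro ℓ _
      congr 1
      congr 1
      omega
    · intro c hcc hc
      have hA : ¬ ((c:ℕ) = 0) := fun h => hc.1 (Fin.ext (by omega))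
      have hB : ¬ ((c:ℕ) = (j:ℕ) + 1) := fun h => hc.2 (Fin.ext (by omega))
      have : companion p α c j = 0 := by
        unfold companion
        simp only [Matrix.of_apply]
        rw [if_neg hA, if_neg hB]
      rw [this, mul_zero]
    · intro h; exact absurd (Finset.mem_univ _) h
    · intro h; exact absurd (Finset.mem_univ _) h
  · -- j is the last index
    have hjp : (j : ℕ) = p - 1 := by have := j.isLt; omega
    have hSv : Sv p α r j = 0 := by
      unfold Sv
      have : Finset.univ.filter (fun ℓ : Fin p => j < ℓ) = ∅ := by
        ext ℓ
        simp only [Finset.mem_filter, Finset.mem_univ, true_and, Fin.lt_def, Finset.notMem_empty,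
          iff_false]
        have := ℓ.isLt
        omega
      rw [this, Finset.sum_empty]
    rw [hSv, add_zero]
    rw [Finset.sum_eq_single (⟨0, hp⟩ : Fin p)]
    · have h1 : companion p α ⟨0, hp⟩ j = α j := by unfold companion; simp
      rw [h1, vt_zero hp hroot, one_mul]
    · intro c hcc hc
      have hcl := c.isLt
      have hA : ¬ ((c:ℕ) = 0) := fun h => hc (Fin.ext (by omega))
      have hB : ¬ ((c:ℕ) = (j:ℕ) + 1) := by omega
      have : companion p α c j = 0 := by
        unfold companion
        simp only [Matrix.of_apply]
        rw [if_neg hA, if_neg hB]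
      rw [this, mul_zero]
    · intro h; exact absurd (Finset.mem_univ _) h

lemma left_eigen (hp : 0 < p) (hr : 0 < r) (hroot : phi p α r = 1) (j : Fin p) :
    ∑ i, vt p α r i * companion p α i j = r * vt p α r j := by
  rw [col_sum hp hroot j, r_mul_vt hr j]

lemma left_eigen_pow (hp : 0 < p) (hr : 0 < r) (hroot : phi p α r = 1) (n : ℕ) (j : Fin p) :
    ∑ i, vt p α r i * (companion p α ^ n) i j = r ^ n * vt p α r j := by
  induction n generalizing j with
  | zero => simp [Matrix.one_apply, Finset.sum_ite_eq Finset.univ j (vt p α r)]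
  | succ n ih =>
    have hP : ∀ i, (companion p α ^ (n + 1)) i j
        = ∑ k, (companion p α ^ n) i k * companion p α k j := by
      intro i
      rw [pow_succ, Matrix.mul_apply]
    simp only [hP]
    calc ∑ i : Fin p, vt p α r i * ∑ k, (companion p α ^ n) i k * companion p α k j
        = ∑ i : Fin p, ∑ k, vt p α r i * (companion p α ^ n) i k * companion p α k j := by
          apply Finset.sum_congr rfl
          intro i _
          rw [Finset.mul_sum]
          apply Finset.sum_congr rfl
          intro k _
          ring
      _ = ∑ k : Fin p, ∑ i, vt p α r i * (companion p α ^ n) i k * companion p α k j :=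
          Finset.sum_comm
      _ = ∑ k : Fin p, (r ^ n * vt p α r k) * companion p α k j := by
          apply Finset.sum_congr rfl
          intro k _
          rw [← Finset.sum_mul, ih k]
      _ = r ^ n * ∑ k : Fin p, vt p α r k * companion p α k j := by
          rw [Finset.mul_sum]
          apply Finset.sum_congr rfl
          intro k _
          ring
      _ = r ^ (n + 1) * vt p α r j := by
          rw [left_eigen hp hr hroot j, pow_succ]
          ring

lemma sum_wv_vt (hr : 0 < r) : ∑ i, wv p r i * vt p α r i = Dd p α r := by
  unfold wv vt Dd
  calc ∑ i : Fin p, r ^ (-(i:ℤ)) * ∑ ℓ ∈ Finset.univ.filter (fun ℓ : Fin p => i ≤ ℓ),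
          α ℓ * r ^ ((i:ℤ) - (ℓ:ℤ) - 1)
      = ∑ i : Fin p, ∑ ℓ ∈ Finset.univ.filter (fun ℓ : Fin p => i ≤ ℓ),
          α ℓ * r ^ (-((ℓ:ℕ) + 1 : ℤ)) := by
        apply Finset.sum_congr rfl
        intro i _
        rw [Finset.mul_sum]
        apply Finset.sum_congr rfl
        intro ℓ _
        rw [mul_left_comm, ← zpow_add₀ hr.ne']
        congr 2
        push_cast
        ring
    _ = ∑ i : Fin p, ∑ ℓ : Fin p, (if i ≤ ℓ then α ℓ * r ^ (-((ℓ:ℕ) + 1 : ℤ)) else 0) := by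
        apply Finset.sum_congr rfl
        intro i _
        rw [Finset.sum_filter]
    _ = ∑ ℓ : Fin p, ∑ i : Fin p, (if i ≤ ℓ then α ℓ * r ^ (-((ℓ:ℕ) + 1 : ℤ)) else 0) :=
        Finset.sum_comm
    _ = ∑ ℓ : Fin p, ((ℓ:ℕ) + 1 : ℝ) * (α ℓ * r ^ (-((ℓ:ℕ) + 1 : ℤ))) := by
        apply Finset.sum_congr rfl
        intro ℓ _
        rw [← Finset.sum_filter]
        have h : Finset.univ.filter (fun i : Fin p => i ≤ ℓ) = Finset.Iic ℓ := by ext i; simp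
        rw [h, Finset.sum_const, Fin.card_Iic]
        push_cast
        ring
    _ = ∑ k : Fin p, ((k:ℕ) + 1 : ℝ) * α k * r ^ (-((k:ℕ) + 1 : ℤ)) := by
        apply Finset.sum_congr rfl
        intro k _
        ring

lemma Dd_pos (hp : 0 < p) (hr : 0 < r) (hα : ∀ i, 0 ≤ α i) (hαp : 0 < α ⟨p - 1, Nat.sub_lt hp one_pos⟩) :
    0 < Dd p α r := by
  unfold Dd
  have hL : (⟨p - 1, by omega⟩ : Fin p) ∈ Finset.univ := Finset.mem_univ _
  apply Finset.sum_pos' (fun k _ => by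
    have h1 := hα k
    have h2 : (0:ℝ) < r ^ (-((k:ℕ) + 1 : ℤ)) := zpow_pos hr _
    positivity)
  refine ⟨⟨p - 1, by omega⟩, hL, ?_⟩
  have h2 : (0:ℝ) < r ^ (-(((⟨p - 1, by omega⟩ : Fin p):ℕ) + 1 : ℤ)) := zpow_pos hr _
  positivity

lemma vt_nonneg (hr : 0 < r) (hα : ∀ i, 0 ≤ α i) (i : Fin p) : 0 ≤ vt p α r i := by
  unfold vt
  apply Finset.sum_nonneg
  intro ℓ _
  have h1 := hα ℓ
  have h2 : (0:ℝ) < r ^ ((i:ℤ) - (ℓ:ℤ) - 1) := zpow_pos hr _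
  positivity

end eig
section spec
variable {p : ℕ} {α : Fin p → ℝ} {r : ℝ}

lemma algebraMap_mulVec (z : ℂ) (x : Fin p → ℂ) (i : Fin p) :
    ((algebraMap ℂ (Matrix (Fin p) (Fin p) ℂ)) z).mulVec x i = z * x i := by
  rw [Matrix.algebraMap_eq_diagonal, Matrix.mulVec_diagonal]
  simp [Pi.algebraMap_apply]

lemma companionC_apply (i j : Fin p) :
    (companion p α).map (Complex.ofReal : ℝ → ℂ) i j
      = if (i : ℕ) = 0 then (α j : ℂ) else if (i : ℕ) = (j : ℕ) + 1 then 1 else 0 := by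
  rw [Matrix.map_apply]
  unfold companion
  simp only [Matrix.of_apply]
  split_ifs <;> simp

lemma companionC_row0 (α : Fin p → ℝ) (hp : 0 < p) (x : Fin p → ℂ) :
    ((companion p α).map (Complex.ofReal : ℝ → ℂ)).mulVec x ⟨0, hp⟩
      = ∑ j, (α j : ℂ) * x j := by
  rw [Matrix.mulVec]
  simp only [dotProduct]
  apply Finset.sum_congr rfl
  intro j _
  rw [companionC_apply]
  simp

lemma companionC_row (α : Fin p → ℝ) (x : Fin p → ℂ) (i : Fin p) (hi : 0 < (i : ℕ)) :
    ((companion p α).map (Complex.ofReal : ℝ → ℂ)).mulVec x i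
      = x ⟨(i : ℕ) - 1, by omega⟩ := by
  rw [Matrix.mulVec]
  simp only [dotProduct]
  rw [Finset.sum_eq_single (⟨(i : ℕ) - 1, by omega⟩ : Fin p)]
  · rw [companionC_apply, if_neg (by omega), if_pos (by simp; omega), one_mul]
  · intro b _ hb
    rw [companionC_apply, if_neg (by omega), if_neg, zero_mul]
    intro h
    exact hb (Fin.ext (by simp; omega))
  · intro h; exact absurd (Finset.mem_univ _) h

lemma spectrum_iff_eigen (hp : 0 < p) (z : ℂ) :
    z ∈ spectrum ℂ ((companion p α).map (Complex.ofReal : ℝ → ℂ))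
      ↔ ∃ x : Fin p → ℂ, x ≠ 0 ∧
        ∀ i, ((companion p α).map (Complex.ofReal : ℝ → ℂ)).mulVec x i = z * x i := by
  rw [spectrum.mem_iff, Matrix.isUnit_iff_isUnit_det, isUnit_iff_ne_zero, not_not,
    ← Matrix.exists_mulVec_eq_zero_iff]
  constructor
  · rintro ⟨x, hx0, hx⟩
    refine ⟨x, hx0, fun i => ?_⟩
    have h1 : ((algebraMap ℂ (Matrix (Fin p) (Fin p) ℂ)) z *ᵥ x
        - (companion p α).map (Complex.ofReal : ℝ → ℂ) *ᵥ x) i = 0 := by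
      rw [← Matrix.sub_mulVec, hx]; rfl
    have h2 := algebraMap_mulVec z x i
    have h3 : ((algebraMap ℂ (Matrix (Fin p) (Fin p) ℂ)) z *ᵥ x) i
        - ((companion p α).map (Complex.ofReal : ℝ → ℂ) *ᵥ x) i = 0 := h1
    rw [h2] at h3
    linear_combination -h3
  · rintro ⟨x, hx0, hx⟩
    refine ⟨x, hx0, ?_⟩
    funext i
    rw [Matrix.sub_mulVec]
    have h2 := algebraMap_mulVec z x i
    show ((algebraMap ℂ (Matrix (Fin p) (Fin p) ℂ)) z *ᵥ x) i
        - ((companion p α).map (Complex.ofReal : ℝ → ℂ) *ᵥ x) i = 0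
    rw [h2, hx i]
    ring

lemma spectrum_char (hp : 0 < p) {z : ℂ}
    (hz : z ∈ spectrum ℂ ((companion p α).map (Complex.ofReal : ℝ → ℂ))) :
    z ^ p = ∑ j : Fin p, (α j : ℂ) * z ^ (p - 1 - (j : ℕ)) := by
  obtain ⟨x, hx0, heig⟩ := (spectrum_iff_eigen hp z).mp hz
  set t := x ⟨p - 1, by omega⟩ with ht
  -- downward recursion
  have hrec : ∀ k, k ≤ p - 1 → x ⟨p - 1 - k, by omega⟩ = z ^ k * t := by
    intro k
    induction k with
    | zero => intro _; simp [ht]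
    | succ k ih =>
      intro hk
      have hk' : k ≤ p - 1 := by omega
      have hxk := ih hk'
      set i : Fin p := ⟨p - 1 - k, by omega⟩ with hi
      have hiv : (i : ℕ) = p - 1 - k := rfl
      have hipos : 0 < (i : ℕ) := by omega
      have := companionC_row α x i hipos
      rw [heig i] at this
      have hidx : (⟨(i : ℕ) - 1, by omega⟩ : Fin p) = ⟨p - 1 - (k + 1), by omega⟩ :=
        Fin.ext (by simp only [Fin.val_mk]; omega)
      rw [hidx] at this
      rw [← this, hxk, pow_succ]
      ring
  have hxj : ∀ j : Fin p, x j = z ^ (p - 1 - (j : ℕ)) * t := by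
    intro j
    have hj := j.isLt
    have := hrec (p - 1 - (j : ℕ)) (by omega)
    have hidx : (⟨p - 1 - (p - 1 - (j : ℕ)), by omega⟩ : Fin p) = j :=
      Fin.ext (by simp only [Fin.val_mk]; omega)
    rw [hidx] at this
    exact this
  have ht0 : t ≠ 0 := by
    intro h
    apply hx0
    funext j
    rw [hxj j, h, mul_zero]
    rfl
  have hrow0 := companionC_row0 α hp x
  rw [heig ⟨0, hp⟩] at hrow0
  simp only [hxj] at hrow0
  apply mul_right_cancel₀ ht0
  calc z ^ p * t = z * (z ^ (p - 1 - ((⟨0, hp⟩ : Fin p) : ℕ)) * t) := by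
        show z ^ p * t = z * (z ^ (p - 1 - 0) * t)
        rw [Nat.sub_zero, ← mul_assoc, ← pow_succ']
        congr 2
        omega
    _ = ∑ j : Fin p, (α j : ℂ) * (z ^ (p - 1 - (j : ℕ)) * t) := hrow0
    _ = (∑ j : Fin p, (α j : ℂ) * z ^ (p - 1 - (j : ℕ))) * t := by
        rw [Finset.sum_mul]
        apply Finset.sum_congr rfl
        intro j _
        ring

lemma zpow_mul_pow (hs : (0:ℝ) < r) (k : Fin p) :
    r ^ p * r ^ (-((k:ℕ) + 1) : ℤ) = r ^ (p - 1 - (k : ℕ)) := by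
  have hk := k.isLt
  rw [← zpow_natCast r p, ← zpow_add₀ hs.ne', ← zpow_natCast r (p - 1 - (k:ℕ))]
  congr 1
  push_cast
  omega

lemma char_real (hp : 0 < p) (hr : 0 < r) (hroot : phi p α r = 1) :
    ∑ k : Fin p, α k * r ^ (p - 1 - (k : ℕ)) = r ^ p := by
  have h1 : r ^ p * phi p α r = r ^ p := by rw [hroot, mul_one]
  unfold phi at h1
  rw [Finset.mul_sum] at h1
  calc ∑ k : Fin p, α k * r ^ (p - 1 - (k : ℕ))
      = ∑ k : Fin p, r ^ p * (α k * r ^ (-((k:ℕ) + 1) : ℤ)) := by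
        apply Finset.sum_congr rfl
        intro k _
        rw [mul_left_comm, ← zpow_mul_pow hr k]
    _ = r ^ p := h1

lemma specRad_eq (hp : 0 < p) (hα : ∀ i, α i ∈ Set.Icc (0:ℝ) 1)
    (hαp : 0 < α ⟨p - 1, Nat.sub_lt hp one_pos⟩) (hr : 0 < r) (hroot : phi p α r = 1) :
    specRad (companion p α) = r := by
  have hge : IsGreatest
      {s : ℝ | ∃ z ∈ spectrum ℂ ((companion p α).map (Complex.ofReal : ℝ → ℂ)),
        ‖z‖ = s} r := by
    constructor
    · -- r is attained
      refine ⟨(r : ℂ), ?_, by simp [abs_of_pos hr]⟩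
      rw [spectrum_iff_eigen hp]
      refine ⟨fun j => (r:ℂ) ^ (p - 1 - (j : ℕ)), ?_, ?_⟩
      · intro h
        have := congrFun h ⟨p - 1, by omega⟩
        simp only [Pi.zero_apply] at this
        rw [show p - 1 - ((⟨p - 1, by omega⟩ : Fin p) : ℕ) = 0 from by simp, pow_zero] at this
        exact one_ne_zero this
      · intro i
        rcases Nat.eq_zero_or_pos (i : ℕ) with h0 | h0
        · have hi : i = ⟨0, hp⟩ := Fin.ext h0
          subst hi
          rw [companionC_row0 α hp]
          have : ∑ j : Fin p, ((α j : ℂ)) * (r:ℂ) ^ (p - 1 - (j : ℕ)) = (r:ℂ) ^ p := by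
            have := char_real hp hr hroot
            have := congrArg (Complex.ofReal : ℝ → ℂ) this
            push_cast at this
            exact this
          rw [this]
          show (r:ℂ) ^ p = (r:ℂ) * (r:ℂ) ^ (p - 1 - 0)
          rw [Nat.sub_zero, ← pow_succ']
          congr 1
          omega
        · rw [companionC_row α _ i h0]
          show (r:ℂ) ^ (p - 1 - ((i:ℕ) - 1)) = (r:ℂ) * (r:ℂ) ^ (p - 1 - (i:ℕ))
          rw [← pow_succ']
          congr 1
          have := i.isLt
          omega
    · -- upper bound
      rintro s ⟨z, hz, rfl⟩
      by_contra hlt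
      push_neg at hlt
      set s := ‖z‖ with hs
      have hs0 : 0 < s := lt_trans hr hlt
      have hchar := spectrum_char hp hz
      have habs : s ^ p ≤ ∑ j : Fin p, α j * s ^ (p - 1 - (j : ℕ)) := by
        calc s ^ p = ‖z ^ p‖ := by rw [norm_pow]
          _ = ‖∑ j : Fin p, (α j : ℂ) * z ^ (p - 1 - (j : ℕ))‖ := by rw [hchar]
          _ ≤ ∑ j : Fin p, ‖(α j : ℂ) * z ^ (p - 1 - (j : ℕ))‖ := by
              apply norm_sum_le
          _ = ∑ j : Fin p, α j * s ^ (p - 1 - (j : ℕ)) := by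
              apply Finset.sum_congr rfl
              intro j _
              rw [norm_mul, norm_pow, Complex.norm_real, Real.norm_of_nonneg (hα j).1]
      have hphi : phi p α s < 1 := by
        rw [← hroot]
        exact phi_strictAnti hp (fun i => (hα i).1) hαp hr hlt
      have hlt2 : ∑ j : Fin p, α j * s ^ (p - 1 - (j : ℕ)) < s ^ p := by
        have h1 : s ^ p * phi p α s < s ^ p * 1 := by
          apply mul_lt_mul_of_pos_left hphi (pow_pos hs0 _)
        rw [mul_one] at h1
        calc ∑ j : Fin p, α j * s ^ (p - 1 - (j : ℕ))
            = s ^ p * phi p α s := by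
              unfold phi
              rw [Finset.mul_sum]
              apply Finset.sum_congr rfl
              intro k _
              rw [mul_left_comm, ← zpow_mul_pow hs0 k]
          _ < s ^ p := h1
      linarith
  exact hge.csSup_eq

end spec

set_option maxHeartbeats 2000000 in
/-- in the primitive case, `ρ(A)^{−n} A^n → Π := u vᵀ` as `n → ∞`. -/
theorem normalized_powers_tendsto_perron_projection
    (p : ℕ) (hp : 0 < p) (α : Fin p → ℝ)
    (hα : ∀ i, α i ∈ Set.Icc (0 : ℝ) 1)
    (hαp : 0 < α ⟨p - 1, by omega⟩)
    (hgcd : (Finset.univ.filter fun i : Fin p => 0 < α i).gcd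
        (fun i => (i : ℕ) + 1) = 1) :
    Tendsto (fun n : ℕ => (specRad (companion p α) ^ n)⁻¹ • (companion p α) ^ n)
      atTop
      (nhds (Matrix.vecMulVec (perronU p (specRad (companion p α)))
        (perronV p α (specRad (companion p α))))) := by
  classical
  obtain ⟨r, hr, hroot⟩ := phi_root_exists hp hα hαp
  have hα0 : ∀ i, 0 ≤ α i := fun i => (hα i).1
  have hspec : specRad (companion p α) = r := specRad_eq hp hα hαp hr hroot
  rw [hspec]
  have hw : ∀ i : Fin p, 0 < wv p r i := wv_pos hr
  have hrn : ∀ n : ℕ, (0:ℝ) < r ^ n := fun n => pow_pos hr n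
  set A := companion p α with hA
  set T : ℕ → Fin p → Fin p → ℝ :=
    fun n i j => (A ^ n) i j * wv p r j / (r ^ n * wv p r i) with hT
  have hmul : ∀ a b i j, T (a + b) i j = ∑ k, T a i k * T b k j := by
    intro a b i j
    have hexp : (A ^ (a + b)) i j = ∑ k, (A ^ a) i k * (A ^ b) k j := by
      rw [pow_add, Matrix.mul_apply]
    simp only [hT, hexp, Finset.sum_mul, Finset.sum_div]
    apply Finset.sum_congr rfl
    intro k _
    rw [pow_add]
    have h1 := (hw i).ne'
    have h2 := (hw j).ne'
    have h3 := (hw k).ne'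
    have h4 := hr.ne'
    field_simp
  have hpos : ∀ n i j, 0 ≤ T n i j := by
    intro n i j
    have h1 := companion_pow_nonneg hα0 n i j
    have h2 := (hw j).le
    have h3 := hrn n
    have h4 := hw i
    positivity
  have hrow : ∀ n i, ∑ j, T n i j = 1 := by
    intro n i
    simp only [hT]
    rw [← Finset.sum_div, right_eigen_pow hp hr hroot n i]
    have h1 := (hw i).ne'
    have h3 := (hrn n).ne'
    field_simp
  obtain ⟨N, hN1, hNpos⟩ := primitivity hp hα0 hαp hgcd
  have hTN : ∀ i j, 0 < T N i j := by
    intro i j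
    have h1 := hNpos i j
    have h2 := hw j
    have h3 := hrn N
    have h4 := hw i
    simp only [hT]
    positivity
  have hne2 : (Finset.univ : Finset (Fin p × Fin p)).Nonempty := by
    have : Nonempty (Fin p × Fin p) := ⟨(⟨0, hp⟩, ⟨0, hp⟩)⟩
    exact Finset.univ_nonempty
  set δ : ℝ := Finset.univ.inf' hne2 (fun q : Fin p × Fin p => T N q.1 q.2) with hδdef
  have hδ : 0 < δ := by
    rw [hδdef, Finset.lt_inf'_iff]
    exact fun q _ => hTN q.1 q.2
  have hKN : ∀ i j, δ ≤ T N i j := fun i j =>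
    Finset.inf'_le (fun q : Fin p × Fin p => T N q.1 q.2) (Finset.mem_univ (i, j))
  obtain ⟨L, hL⟩ := stoch_conv hp T hmul hpos hrow N hN1 δ hδ hKN
  -- identify the limit using the left eigenvector
  have hD : 0 < Dd p α r := Dd_pos hp hr hα0 hαp
  have hσsum : ∀ n j, ∑ i, (vt p α r i * wv p r i / Dd p α r) * T n i j
      = vt p α r j * wv p r j / Dd p α r := by
    intro n j
    have key : ∀ i : Fin p, (vt p α r i * wv p r i / Dd p α r) * T n i j
        = (vt p α r i * (A ^ n) i j) * (wv p r j / (Dd p α r * r ^ n)) := by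
      intro i
      simp only [hT]
      have h4 := (hw i).ne'
      have h3 := (hrn n).ne'
      have h5 := hD.ne'
      field_simp
    rw [Finset.sum_congr rfl (fun i _ => key i), ← Finset.sum_mul]
    rw [left_eigen_pow hp hr hroot n j]
    have h3 := (hrn n).ne'
    have h5 := hD.ne'
    field_simp
  have hσ1 : ∑ i, vt p α r i * wv p r i / Dd p α r = 1 := by
    rw [← Finset.sum_div]
    rw [Finset.sum_congr rfl (fun i _ => mul_comm (vt p α r i) (wv p r i)), sum_wv_vt hr]
    field_simp
  have hLeq : ∀ j, L j = vt p α r j * wv p r j / Dd p α r := by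
    intro j
    have h1 : Tendsto (fun n => ∑ i, (vt p α r i * wv p r i / Dd p α r) * T n i j) atTop
        (nhds (∑ i, (vt p α r i * wv p r i / Dd p α r) * L j)) := by
      apply tendsto_finset_sum
      intro i _
      exact (hL i j).const_mul _
    have h2 : (∑ i, (vt p α r i * wv p r i / Dd p α r) * L j) = L j := by
      rw [← Finset.sum_mul, hσ1, one_mul]
    rw [h2] at h1
    have h3 : Tendsto (fun _ : ℕ => vt p α r j * wv p r j / Dd p α r) atTop
        (nhds (vt p α r j * wv p r j / Dd p α r)) := tendsto_const_nhds
    have h4 : (fun n => ∑ i, (vt p α r i * wv p r i / Dd p α r) * T n i j)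
        = fun _ : ℕ => vt p α r j * wv p r j / Dd p α r := funext (fun n => hσsum n j)
    rw [h4] at h1
    exact tendsto_nhds_unique h1 h3
  -- entrywise convergence
  have hW : 0 < ∑ k : Fin p, r ^ (-(k : ℤ)) := by
    apply Finset.sum_pos (fun k _ => zpow_pos hr _)
    exact ⟨⟨0, hp⟩, Finset.mem_univ _⟩
  have htop : ∀ (i j : Fin p), Tendsto (fun n : ℕ => ((r ^ n)⁻¹ • A ^ n) i j) atTop
      (nhds (Matrix.vecMulVec (perronU p r) (perronV p α r) i j)) := by
    intro i j
    have hfun : (fun n : ℕ => ((r ^ n)⁻¹ • A ^ n) i j)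
        = fun n : ℕ => T n i j * wv p r i / wv p r j := by
      funext n
      simp only [hT, Matrix.smul_apply, smul_eq_mul]
      have h4 := (hw i).ne'
      have h2 := (hw j).ne'
      have h3 := (hrn n).ne'
      field_simp
    rw [hfun]
    have hval : Matrix.vecMulVec (perronU p r) (perronV p α r) i j
        = (vt p α r j * wv p r j / Dd p α r) * wv p r i / wv p r j := by
      rw [Matrix.vecMulVec_apply]
      unfold perronU perronV
      show wv p r i / (∑ k : Fin p, r ^ (-(k : ℤ)))
          * ((∑ k : Fin p, r ^ (-(k : ℤ))) / Dd p α r * vt p α r j)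
        = vt p α r j * wv p r j / Dd p α r * wv p r i / wv p r j
      have h2 := (hw j).ne'
      have h5 := hD.ne'
      have h6 := hW.ne'
      have habs : ∀ (a W D v wj : ℝ), W ≠ 0 → D ≠ 0 → wj ≠ 0 →
          a / W * (W / D * v) = v * wj / D * a / wj := by
        intro a W D v wj hW hD hwj
        field_simp
      exact habs _ _ _ _ _ h6 h5 h2
    rw [hval, ← hLeq j]
    exact ((hL i j).mul_const (wv p r i)).div_const (wv p r j)
  apply tendsto_pi_nhds.2
  intro i
  rw [tendsto_pi_nhds]
  intro j
  exact htop i j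

end
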